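/- Fix x ∈ 𝒳, a regularizer value R ≥ 0, ε > 0, and data ξ̂₁,…,ξ̂ₙ ∈ Ξ. If the image F(x,Ξ) ⊆ ℝ is an interval unbounded above, then (1/n)∑ᵢ F(x,ξ̂ᵢ) + εR equals the supremum of 𝔼_ℚ[ς] over all probability measures ℚ on F(x,Ξ) satisfying W₁(ℚ, F(x,·)_#𝔓̂ₙ) ≤ εR, where 𝔓̂ₙ = (1/n)∑ᵢ δ_{ξ̂ᵢ}. -/

import Mathlib

open MeasureTheory ENNReal

/-- Optimal transport cost between two measures (1-Wasserstein when the cost is a metric). -/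
noncomputable def Wcost {E : Type*} [MeasurableSpace E] (c : E → E → ℝ)
    (μ ν : Measure E) : ℝ≥0∞ :=
  ⨅ (π : Measure (E × E)) (_ : π.map Prod.fst = μ) (_ : π.map Prod.snd = ν),
    ∫⁻ z, ENNReal.ofReal (c z.1 z.2) ∂π

/-- The empirical measure of a finite sample. -/
noncomputable def empMeasure {E : Type*} [MeasurableSpace E] {n : ℕ}
    (ξ : Fin n → E) : Measure E :=
  ((n : ℝ≥0∞))⁻¹ • ∑ i, Measure.dirac (ξ i)

section aux
variable {E : Type*} [MeasurableSpace E] {n : ℕ} (ξ : Fin n → E)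

lemma empMeasure_apply (s : Set E) :
    empMeasure ξ s = (n : ℝ≥0∞)⁻¹ * ∑ i, Measure.dirac (ξ i) s := by
  simp [empMeasure, Measure.smul_apply, Measure.finset_sum_apply, smul_eq_mul]

lemma isProb_empMeasure (hn : 0 < n) : IsProbabilityMeasure (empMeasure ξ) := by
  constructor
  rw [empMeasure_apply]
  simp only [measure_univ, Finset.sum_const, Finset.card_univ, Fintype.card_fin, nsmul_eq_mul,
    mul_one]
  exact ENNReal.inv_mul_cancel (by exact_mod_cast hn.ne') (natCast_ne_top n)

lemma integrable_empMeasure (hn : 0 < n) (f : E → ℝ) (hf : StronglyMeasurable f) :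
    Integrable f (empMeasure ξ) := by
  rw [empMeasure, integrable_smul_measure (by simp [hn.ne']) (by simp [hn.ne'])]
  rw [integrable_finset_sum_measure]
  intro i _
  refine ⟨hf.aestronglyMeasurable, ?_⟩
  rw [HasFiniteIntegral, lintegral_dirac' _ (hf.measurable.enorm)]
  exact coe_lt_top

lemma integral_empMeasure (f : E → ℝ) (hf : StronglyMeasurable f) :
    ∫ e, f e ∂(empMeasure ξ) = (∑ i, f (ξ i)) / n := by
  rw [empMeasure, integral_smul_measure,
    integral_finset_sum_measure (fun i _ => ⟨hf.aestronglyMeasurable, by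
      rw [HasFiniteIntegral, lintegral_dirac' _ (hf.measurable.enorm)]
      exact coe_lt_top⟩)]
  simp [integral_dirac' _ _ hf, div_eq_mul_inv, mul_comm]

end aux

lemma integral_id_map {α : Type*} [MeasurableSpace α] (μ : Measure α) (f : α → ℝ)
    (hf : AEMeasurable f μ) : ∫ s, s ∂(μ.map f) = ∫ a, f a ∂μ :=
  integral_map hf (show AEStronglyMeasurable (fun s : ℝ => s) (μ.map f) from
    aestronglyMeasurable_id)

lemma integrable_id_map {α : Type*} [MeasurableSpace α] (μ : Measure α) (f : α → ℝ)
    (hf : AEMeasurable f μ) : Integrable (fun s : ℝ => s) (μ.map f) ↔ Integrable f μ := by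
  rw [integrable_map_measure (show AEStronglyMeasurable (fun s : ℝ => s) (μ.map f) from
    aestronglyMeasurable_id) hf]
  exact Iff.rfl


theorem regSAA_eq_decision_dependent_WDRO
    {E X : Type*} [MeasurableSpace E] {n : ℕ} (hn : 0 < n)
    (Ξ : Set E) (F : X → E → ℝ) (x : X) (R ε : ℝ) (hR : 0 ≤ R) (hε : 0 < ε)
    (ξ : Fin n → E) (hξ : ∀ i, ξ i ∈ Ξ)
    (hFmeas : Measurable (F x))
    (hconn : (F x '' Ξ).OrdConnected) (hub : ¬ BddAbove (F x '' Ξ)) :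
    (∑ i, F x (ξ i)) / n + ε * R =
      sSup {r : ℝ | ∃ Q : Measure ℝ, IsProbabilityMeasure Q ∧ Q ((F x '' Ξ)ᶜ) = 0 ∧
        Wcost (fun a b => |a - b|) Q ((empMeasure ξ).map (F x)) ≤ ENNReal.ofReal (ε * R) ∧
        r = ∫ s, s ∂Q} := by
  have hemp : IsProbabilityMeasure (empMeasure ξ) := isProb_empMeasure ξ hn
  have hc : 0 ≤ ε * R := mul_nonneg hε.le hR
  have hn' : (n : ℝ) ≠ 0 := Nat.cast_ne_zero.mpr hn.ne'
  set S := F x '' Ξ with hS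
  set g : E → ℝ := fun e => F x e + ε * R with hgdef
  have hgmeas : Measurable g := hFmeas.add_const _
  have hgsm : StronglyMeasurable g := hgmeas.stronglyMeasurable
  have hbmem : ∀ i, g (ξ i) ∈ S := by
    intro i
    have ha : F x (ξ i) ∈ S := ⟨ξ i, hξ i, rfl⟩
    obtain ⟨y, hyS, hlt⟩ := not_bddAbove_iff.mp hub (g (ξ i))
    exact hconn.out ha hyS ⟨le_add_of_nonneg_right hc, hlt.le⟩
  set Q₀ : Measure ℝ := (empMeasure ξ).map g with hQ₀def
  have hQ₀prob : IsProbabilityMeasure Q₀ := Measure.isProbabilityMeasure_map hgmeas.aemeasurable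
  -- Q₀ vanishes outside S
  have hQ₀null : Q₀ Sᶜ = 0 := by
    have hT : (Set.range fun i => g (ξ i)) ⊆ S := by rintro _ ⟨i, rfl⟩; exact hbmem i
    have hTmeas : MeasurableSet (Set.range fun i => g (ξ i)) :=
      (Set.finite_range _).measurableSet
    refine measure_mono_null (Set.compl_subset_compl.mpr hT) ?_
    rw [hQ₀def, Measure.map_apply hgmeas hTmeas.compl, empMeasure_apply, Set.preimage_compl]
    have hzero : ∀ i : Fin n, Measure.dirac (ξ i) ((g ⁻¹' (Set.range fun i => g (ξ i)))ᶜ) = 0 := by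
      intro i
      rw [Measure.dirac_apply' _ (hgmeas hTmeas).compl]
      have hmem : ξ i ∉ (g ⁻¹' (Set.range fun i => g (ξ i)))ᶜ := by
        simp only [Set.mem_compl_iff, Set.mem_preimage, not_not]
        exact ⟨i, rfl⟩
      simp [Set.indicator_of_notMem hmem]
    simp [hzero]
  -- coupling showing the Wasserstein constraint for Q₀
  set π₀ : Measure (ℝ × ℝ) := (empMeasure ξ).map (fun e => (g e, F x e)) with hπ₀def
  have hπ₀meas : Measurable (fun e => (g e, F x e)) := hgmeas.prodMk hFmeas
  have hfst₀ : π₀.map Prod.fst = Q₀ := by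
    rw [hπ₀def, Measure.map_map measurable_fst hπ₀meas]; rfl
  have hsnd₀ : π₀.map Prod.snd = (empMeasure ξ).map (F x) := by
    rw [hπ₀def, Measure.map_map measurable_snd hπ₀meas]; rfl
  have hcost₀ : ∫⁻ z : ℝ × ℝ, ENNReal.ofReal |z.1 - z.2| ∂π₀ = ENNReal.ofReal (ε * R) := by
    rw [hπ₀def, lintegral_map (by fun_prop) hπ₀meas]
    have : (fun e => ENNReal.ofReal |(g e, F x e).1 - (g e, F x e).2|)
        = fun _ => ENNReal.ofReal (ε * R) := by
      funext e; simp [hgdef, abs_of_nonneg hc]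
    rw [this, lintegral_const, measure_univ, mul_one]
  have hWle : Wcost (fun a b => |a - b|) Q₀ ((empMeasure ξ).map (F x))
      ≤ ENNReal.ofReal (ε * R) := by
    refine iInf_le_of_le π₀ ?_
    rw [iInf_pos hfst₀, iInf_pos hsnd₀, hcost₀]
  have hQ₀int : ∫ s, s ∂Q₀ = (∑ i, F x (ξ i)) / n + ε * R := by
    rw [hQ₀def, integral_id_map _ _ hgmeas.aemeasurable, integral_empMeasure ξ g hgsm]
    simp only [hgdef]
    rw [Finset.sum_add_distrib, Finset.sum_const, Finset.card_univ, Fintype.card_fin,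
      nsmul_eq_mul, add_div]
    congr 1
    field_simp
  -- upper bound
  have hubnd : ∀ r ∈ {r : ℝ | ∃ Q : Measure ℝ, IsProbabilityMeasure Q ∧ Q Sᶜ = 0 ∧
      Wcost (fun a b => |a - b|) Q ((empMeasure ξ).map (F x)) ≤ ENNReal.ofReal (ε * R) ∧
      r = ∫ s, s ∂Q}, r ≤ (∑ i, F x (ξ i)) / n + ε * R := by
    rintro r ⟨Q, hQprob, -, hW, rfl⟩
    have key : ∀ δ : ℝ, 0 < δ → ∫ s, s ∂Q ≤ (∑ i, F x (ξ i)) / n + ε * R + δ := by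
      intro δ hδ
      have hlt : Wcost (fun a b => |a - b|) Q ((empMeasure ξ).map (F x))
          < ENNReal.ofReal (ε * R + δ) := by
        refine lt_of_le_of_lt hW ?_
        rw [ENNReal.ofReal_add hc hδ.le]
        exact ENNReal.lt_add_right ofReal_ne_top (ENNReal.ofReal_pos.mpr hδ).ne'
      rw [Wcost] at hlt
      simp only [iInf_lt_iff] at hlt
      obtain ⟨π, hπ1, hπ2, hπcost⟩ := hlt
      have hμint : Integrable (fun s : ℝ => s) ((empMeasure ξ).map (F x)) := by
        rw [integrable_id_map _ _ hFmeas.aemeasurable]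
        exact integrable_empMeasure ξ hn _ hFmeas.stronglyMeasurable
      have hsnd : Integrable (fun z : ℝ × ℝ => z.2) π := by
        rw [← hπ2, integrable_id_map _ _ measurable_snd.aemeasurable] at hμint
        exact hμint
      have hnn : ∀ z : ℝ × ℝ, ‖z.1 - z.2‖ₑ = ENNReal.ofReal |z.1 - z.2| := by
        intro z; rw [← ofReal_norm_eq_enorm, Real.norm_eq_abs]
      have hdiff : Integrable (fun z : ℝ × ℝ => z.1 - z.2) π := by
        refine ⟨(measurable_fst.sub measurable_snd).aestronglyMeasurable, ?_⟩
        rw [HasFiniteIntegral]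
        simp_rw [hnn]
        exact hπcost.trans_le le_top
      have hint : ∫ s, s ∂Q = ∫ z : ℝ × ℝ, z.1 ∂π := by
        rw [← hπ1, integral_id_map _ _ measurable_fst.aemeasurable]
      have hμval : ∫ z : ℝ × ℝ, z.2 ∂π = (∑ i, F x (ξ i)) / n := by
        have h1 : ∫ s, s ∂((empMeasure ξ).map (F x)) = (∑ i, F x (ξ i)) / n := by
          rw [integral_id_map _ _ hFmeas.aemeasurable]
          exact integral_empMeasure ξ _ hFmeas.stronglyMeasurable
        rw [← h1, ← hπ2, integral_id_map _ _ measurable_snd.aemeasurable]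
      have hdiffle : ∫ z : ℝ × ℝ, z.1 - z.2 ∂π ≤ ε * R + δ := by
        have habs : ∫ z : ℝ × ℝ, z.1 - z.2 ∂π ≤ ∫ z : ℝ × ℝ, |z.1 - z.2| ∂π := by
          refine le_trans (le_abs_self _) ?_
          rw [← Real.norm_eq_abs]
          refine le_trans (norm_integral_le_integral_norm _) ?_
          simp [Real.norm_eq_abs]
        refine habs.trans ?_
        rw [integral_eq_lintegral_of_nonneg_ae (f := fun z : ℝ × ℝ => |z.1 - z.2|) (Filter.Eventually.of_forall fun z => abs_nonneg _)
          ((measurable_fst.sub measurable_snd).abs.aestronglyMeasurable)]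
        calc (∫⁻ z : ℝ × ℝ, ENNReal.ofReal |z.1 - z.2| ∂π).toReal
            ≤ (ENNReal.ofReal (ε * R + δ)).toReal :=
              ENNReal.toReal_mono ofReal_ne_top hπcost.le
          _ = ε * R + δ := ENNReal.toReal_ofReal (by linarith)
      calc ∫ s, s ∂Q = ∫ z : ℝ × ℝ, (z.1 - z.2) + z.2 ∂π := by
            rw [hint]; congr 1; funext z; ring
        _ = (∫ z : ℝ × ℝ, z.1 - z.2 ∂π) + ∫ z : ℝ × ℝ, z.2 ∂π := integral_add hdiff hsnd
        _ ≤ (ε * R + δ) + (∑ i, F x (ξ i)) / n := add_le_add hdiffle hμval.le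
        _ = (∑ i, F x (ξ i)) / n + ε * R + δ := by ring
    exact le_of_forall_pos_le_add key
  symm
  refine IsGreatest.csSup_eq ⟨⟨Q₀, hQ₀prob, hQ₀null, hWle, hQ₀int.symm⟩, hubnd⟩
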